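/- Amortised bisimilarity is cost improving: if Γ ⊨ (M ▹ P) ≲^n (N ▹ Q) and M ▹ P →_l M' ▹ P', then there exist N', Q' and k with N ▹ Q →*_k N' ▹ Q' and Γ ⊨ (M' ▹ P') ≲^{n+k−l} (N' ▹ Q'). -/

import Mathlib

/-! # πcr : a π-calculus with explicit resource management (costed semantics) -/

abbrev Chan := ℕ
abbrev Var := ℕ

inductive Ident : Type
  | ch (c : Chan)
  | var (x : Var)
deriving DecidableEq

/-- Type attributes: unrestricted ω, affine 1, unique-after-i •ᵢ. -/
inductive Attr : Type
  | unr
  | aff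
  | unq (i : ℕ)
deriving DecidableEq

/-- Types: channel types [T⃗]^a, recursive types μX.C (de Bruijn), type
variables, and the process type. -/
inductive Ty : Type
  | chan (args : List Ty) (a : Attr)
  | mu (body : Ty)
  | tvar (n : ℕ)
  | proc

mutual
  /-- Substitute `R` for the de Bruijn type variable `n`. -/
  def Ty.substT (n : ℕ) (R : Ty) : Ty → Ty
    | .chan ts a => .chan (Ty.substTList n R ts) a
    | .mu T => .mu (Ty.substT (n + 1) R T)
    | .tvar m => if m = n then R else .tvar m
    | .proc => .proc
  def Ty.substTList (n : ℕ) (R : Ty) : List Ty → List Ty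
    | [] => []
    | t :: ts => Ty.substT n R t :: Ty.substTList n R ts
end

/-- Equi-recursive type equivalence: least type-congruence satisfying eRec. -/
inductive TyEquiv : Ty → Ty → Prop
  | refl (T) : TyEquiv T T
  | symm : TyEquiv T T' → TyEquiv T' T
  | trans : TyEquiv T T' → TyEquiv T' T'' → TyEquiv T T''
  | unfold (T) : TyEquiv (.mu T) (Ty.substT 0 (.mu T) T)
  | chanCong (ts₁ ts₂ : List Ty) (a : Attr) :
      TyEquiv T T' → TyEquiv (.chan (ts₁ ++ T :: ts₂) a) (.chan (ts₁ ++ T' :: ts₂) a)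
  | muCong : TyEquiv T T' → TyEquiv (.mu T) (.mu T')

/-- Subtyping on attributes: •ᵢ <: •ᵢ₊₁, •ᵢ <: ω, ω <: 1. -/
inductive AttrSub : Attr → Attr → Prop
  | indx (i) : AttrSub (.unq i) (.unq (i + 1))
  | unqUnr (i) : AttrSub (.unq i) .unr
  | unrAff : AttrSub .unr .aff

/-- Subtyping on channel types (same object types). -/
inductive TySub : Ty → Ty → Prop
  | chan (ts) : AttrSub a a' → TySub (.chan ts a) (.chan ts a')

/-- Type splitting T = T₁ ∘ T₂. -/
inductive TySplit : Ty → Ty → Ty → Prop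
  | unr (ts) : TySplit (.chan ts .unr) (.chan ts .unr) (.chan ts .unr)
  | proc : TySplit .proc .proc .proc
  | unq (ts i) : TySplit (.chan ts (.unq i)) (.chan ts .aff) (.chan ts (.unq (i + 1)))

/-- Type environments: multisets of assumptions. -/
abbrev TyEnv := Multiset (Ident × Ty)

def TyEnv.domChans (Γ : TyEnv) : Set Chan := {c | ∃ T, (Ident.ch c, T) ∈ Γ}

def TyEnv.IsPartialMap (Γ : TyEnv) : Prop := (Γ.map Prod.fst).Nodup

/-- The environment structural relation Γ ≺ Γ'. -/
inductive EnvStruct : TyEnv → TyEnv → Prop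
  | refl (Γ) : EnvStruct Γ Γ
  | trans : EnvStruct Γ Γ' → EnvStruct Γ' Γ'' → EnvStruct Γ Γ''
  | con : TySplit T T₁ T₂ → EnvStruct (Γ + {(u, T)}) (Γ + {(u, T₁), (u, T₂)})
  | join : TySplit T T₁ T₂ → EnvStruct (Γ + {(u, T₁), (u, T₂)}) (Γ + {(u, T)})
  | weak (Γ u T) : EnvStruct (Γ + {(u, T)}) Γ
  | tyEq : TyEquiv T₁ T₂ → EnvStruct (Γ + {(u, T₁)}) (Γ + {(u, T₂)})
  | sub : TySub T₁ T₂ → EnvStruct (Γ + {(u, T₁)}) (Γ + {(u, T₂)})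
  | rev (Γ u ts₁ ts₂) :
      EnvStruct (Γ + {(u, Ty.chan ts₁ (.unq 0))}) (Γ + {(u, Ty.chan ts₂ (.unq 0))})

/-- Consistency of a type environment. -/
def TyEnv.Consistent (Γ : TyEnv) : Prop :=
  ∃ Γ' : TyEnv, TyEnv.IsPartialMap Γ' ∧ EnvStruct Γ' Γ

/-- πcr processes. -/
inductive Proc : Type
  | output (u : Ident) (vs : List Ident) (P : Proc)
  | input (u : Ident) (xs : List Var) (P : Proc)
  | nil
  | ifeq (u v : Ident) (P Q : Proc)
  | recur (w : Var) (P : Proc)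
  | pvar (w : Var)
  | par (P Q : Proc)
  | alloc (x : Var) (P : Proc)
  | free (u : Ident) (P : Proc)

def Ident.subst (σ : Var → Option Chan) : Ident → Ident
  | .ch c => .ch c
  | .var x => match σ x with | some d => .ch d | none => .var x

def Ident.rename (σ : Chan → Chan) : Ident → Ident
  | .ch c => .ch (σ c)
  | .var x => .var x

def Ident.vars : Ident → Set Var
  | .ch _ => ∅
  | .var x => {x}

def Ident.chans : Ident → Set Chan
  | .ch c => {c}
  | .var _ => ∅

def removeVars (σ : Var → Option Chan) (xs : List Var) : Var → Option Chan :=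
  fun x => if x ∈ xs then none else σ x

/-- Capture-avoiding substitution of channels for variables. -/
def Proc.subst : (Var → Option Chan) → Proc → Proc
  | σ, .output u vs P => .output (u.subst σ) (vs.map (Ident.subst σ)) (Proc.subst σ P)
  | σ, .input u xs P => .input (u.subst σ) xs (Proc.subst (removeVars σ xs) P)
  | _, .nil => .nil
  | σ, .ifeq u v P Q => .ifeq (u.subst σ) (v.subst σ) (Proc.subst σ P) (Proc.subst σ Q)
  | σ, .recur w P => .recur w (Proc.subst (removeVars σ [w]) P)
  | _, .pvar w => .pvar w
  | σ, .par P Q => .par (Proc.subst σ P) (Proc.subst σ Q)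
  | σ, .alloc x P => .alloc x (Proc.subst (removeVars σ [x]) P)
  | σ, .free u P => .free (u.subst σ) (Proc.subst σ P)

/-- The substitution {d⃗/x⃗}. -/
def substOf (xs : List Var) (ds : List Chan) : Var → Option Chan :=
  fun x => (xs.zip ds).lookup x

/-- Substitution of a process `R` for the process variable `w`. -/
def Proc.substProc (w : Var) (R : Proc) : Proc → Proc
  | .output u vs P => .output u vs (Proc.substProc w R P)
  | .input u xs P => if w ∈ xs then .input u xs P else .input u xs (Proc.substProc w R P)
  | .nil => .nil
  | .ifeq u v P Q => .ifeq u v (Proc.substProc w R P) (Proc.substProc w R Q)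
  | .recur w' P => if w' = w then .recur w' P else .recur w' (Proc.substProc w R P)
  | .pvar w' => if w' = w then R else .pvar w'
  | .par P Q => .par (Proc.substProc w R P) (Proc.substProc w R Q)
  | .alloc x P => if x = w then .alloc x P else .alloc x (Proc.substProc w R P)
  | .free u P => .free u (Proc.substProc w R P)

/-- Renaming of channel names in a process. -/
def Proc.rename (σ : Chan → Chan) : Proc → Proc
  | .output u vs P => .output (u.rename σ) (vs.map (Ident.rename σ)) (Proc.rename σ P)
  | .input u xs P => .input (u.rename σ) xs (Proc.rename σ P)
  | .nil => .nil
  | .ifeq u v P Q => .ifeq (u.rename σ) (v.rename σ) (Proc.rename σ P) (Proc.rename σ Q)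
  | .recur w P => .recur w (Proc.rename σ P)
  | .pvar w => .pvar w
  | .par P Q => .par (Proc.rename σ P) (Proc.rename σ Q)
  | .alloc x P => .alloc x (Proc.rename σ P)
  | .free u P => .free (u.rename σ) (Proc.rename σ P)

def listVars (l : List Ident) : Set Var := {x | ∃ u ∈ l, x ∈ Ident.vars u}

def listChans (l : List Ident) : Set Chan := {c | ∃ u ∈ l, c ∈ Ident.chans u}

/-- Free variables of a process. -/
def Proc.freeVars : Proc → Set Var
  | .output u vs P => u.vars ∪ listVars vs ∪ P.freeVars
  | .input u xs P => u.vars ∪ (P.freeVars \ {x | x ∈ xs})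
  | .nil => ∅
  | .ifeq u v P Q => u.vars ∪ v.vars ∪ P.freeVars ∪ Q.freeVars
  | .recur w P => P.freeVars \ {w}
  | .pvar w => {w}
  | .par P Q => P.freeVars ∪ Q.freeVars
  | .alloc x P => P.freeVars \ {x}
  | .free u P => u.vars ∪ P.freeVars

/-- Channel names occurring in a process. -/
def Proc.chans : Proc → Set Chan
  | .output u vs P => u.chans ∪ listChans vs ∪ P.chans
  | .input u _ P => u.chans ∪ P.chans
  | .nil => ∅
  | .ifeq u v P Q => u.chans ∪ v.chans ∪ P.chans ∪ Q.chans
  | .recur _ P => P.chans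
  | .pvar _ => ∅
  | .par P Q => P.chans ∪ Q.chans
  | .alloc _ P => P.chans
  | .free u P => u.chans ∪ P.chans

def Proc.Closed (P : Proc) : Prop := P.freeVars = ∅

/-- Structural equivalence: least congruence for parallel composition with
commutativity, associativity and nil. -/
inductive StructEq : Proc → Proc → Prop
  | refl (P) : StructEq P P
  | symm : StructEq P Q → StructEq Q P
  | trans : StructEq P Q → StructEq Q R → StructEq P R
  | comm (P Q) : StructEq (.par P Q) (.par Q P)
  | assoc (P Q R) : StructEq (.par P (.par Q R)) (.par (.par P Q) R)
  | nil (P) : StructEq (.par P .nil) P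
  | parCong : StructEq P P' → StructEq Q Q' → StructEq (.par P Q) (.par P' Q')

/-- A system: a resource environment (finite set of allocated channels)
together with a process. -/
structure System : Type where
  res : Finset Chan
  proc : Proc

def System.rename (S : System) (σ : Chan → Chan) : System :=
  ⟨S.res.image σ, S.proc.rename σ⟩

def TyEnv.rename (Γ : TyEnv) (σ : Chan → Chan) : TyEnv :=
  Γ.map (fun p => (Ident.rename σ p.1, p.2))

/-- Environments consisting only of unrestricted assumptions. -/
def TyEnv.Unrestricted (Γ : TyEnv) : Prop :=
  ∀ p ∈ Γ, (∃ ts, p.2 = Ty.chan ts .unr) ∨ p.2 = Ty.proc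

/-- The assumptions left from `u : [ts]^a` after one use: the `a − 1`
operation.  Undefined (none) for unique-now. -/
def predEnv (u : Ident) (ts : List Ty) : Attr → Option TyEnv
  | .aff => some 0
  | .unr => some {(u, Ty.chan ts .unr)}
  | .unq 0 => none
  | .unq (i + 1) => some {(u, Ty.chan ts (.unq i))}

/-- The substructural typing judgement Γ ⊢ P. -/
inductive HasTy : TyEnv → Proc → Prop
  | out {Γ Δ : TyEnv} {u : Ident} {ts : List Ty} {a : Attr} {vs : List Ident} {P : Proc} :
      predEnv u ts a = some Δ → vs.length = ts.length →
      HasTy (Γ + Δ) P →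
      HasTy (Γ + {(u, Ty.chan ts a)} + Multiset.ofList (vs.zip ts)) (.output u vs P)
  | inp {Γ Δ : TyEnv} {u : Ident} {ts : List Ty} {a : Attr} {xs : List Var} {P : Proc} :
      predEnv u ts a = some Δ → xs.length = ts.length →
      HasTy (Γ + Δ + Multiset.ofList ((xs.map Ident.var).zip ts)) P →
      HasTy (Γ + {(u, Ty.chan ts a)}) (.input u xs P)
  | par : HasTy Γ₁ P → HasTy Γ₂ Q → HasTy (Γ₁ + Γ₂) (.par P Q)
  | ifeq : (∃ T, (u, T) ∈ Γ) → (∃ T, (v, T) ∈ Γ) →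
      HasTy Γ P → HasTy Γ Q → HasTy Γ (.ifeq u v P Q)
  | recur : TyEnv.Unrestricted Γ → HasTy (Γ + {(Ident.var w, Ty.proc)}) P →
      HasTy Γ (.recur w P)
  | pvar (w) : HasTy {(Ident.var w, Ty.proc)} (.pvar w)
  | free : HasTy Γ P → HasTy (Γ + {(u, Ty.chan ts (.unq 0))}) (.free u P)
  | alloc : HasTy (Γ + {(Ident.var x, Ty.chan ts (.unq 0))}) P → HasTy Γ (.alloc x P)
  | nil : HasTy 0 .nil
  | str : HasTy Γ' P → EnvStruct Γ Γ' → HasTy Γ P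

/-- Configurations Γ ◃ M ▹ P. -/
def IsConfig (Γ : TyEnv) (S : System) : Prop :=
  S.proc.Closed ∧ TyEnv.domChans Γ ⊆ ↑S.res ∧
  ∃ Δ : TyEnv, TyEnv.Consistent (Γ + Δ) ∧ HasTy Δ S.proc ∧ TyEnv.domChans Δ ⊆ ↑S.res

/-- The costed reduction relation M ▹ P →ₖ N ▹ Q. -/
inductive Red : System → ℤ → System → Prop
  | com {M : Finset Chan} {c : Chan} {ds : List Chan} {xs : List Var} {P Q : Proc} :
      c ∈ M → xs.length = ds.length →
      Red ⟨M, .par (.output (.ch c) (ds.map Ident.ch) P) (.input (.ch c) xs Q)⟩ 0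
          ⟨M, .par P (Q.subst (substOf xs ds))⟩
  | ifThen {M : Finset Chan} {c : Chan} {P Q : Proc} :
      c ∈ M → Red ⟨M, .ifeq (.ch c) (.ch c) P Q⟩ 0 ⟨M, P⟩
  | ifElse {M : Finset Chan} {c d : Chan} {P Q : Proc} :
      c ∈ M → d ∈ M → c ≠ d → Red ⟨M, .ifeq (.ch c) (.ch d) P Q⟩ 0 ⟨M, Q⟩
  | unfold {M : Finset Chan} {w : Var} {P : Proc} :
      Red ⟨M, .recur w P⟩ 0 ⟨M, P.substProc w (.recur w P)⟩
  | alloc {M : Finset Chan} {c : Chan} {x : Var} {P : Proc} :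
      c ∉ M → Red ⟨M, .alloc x P⟩ 1 ⟨insert c M, P.subst (substOf [x] [c])⟩
  | free {M : Finset Chan} {c : Chan} {P : Proc} :
      c ∈ M → Red ⟨M, .free (.ch c) P⟩ (-1) ⟨M.erase c, P⟩
  | str {M M' : Finset Chan} {P P' Q Q' : Proc} {k : ℤ} :
      StructEq P P' → Red ⟨M, P'⟩ k ⟨M', Q'⟩ → StructEq Q' Q → Red ⟨M, P⟩ k ⟨M', Q⟩
  | parL {M M' : Finset Chan} {P P' Q : Proc} {k : ℤ} :
      Red ⟨M, P⟩ k ⟨M', P'⟩ → Red ⟨M, .par P Q⟩ k ⟨M', .par P' Q⟩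
  | parR {M M' : Finset Chan} {P Q Q' : Proc} {k : ℤ} :
      Red ⟨M, Q⟩ k ⟨M', Q'⟩ → Red ⟨M, .par P Q⟩ k ⟨M', .par P Q'⟩

/-- Reflexive-transitive closure of reduction, accumulating costs. -/
inductive RedStar : System → ℤ → System → Prop
  | refl (S) : RedStar S 0 S
  | step {S S' S'' : System} {k l : ℤ} :
      RedStar S k S' → Red S' l S'' → RedStar S (k + l) S''

/-- Actions of the (pre-)LTS. -/
inductive Act : Type
  | out (c : Chan) (ds : List Chan)
  | inp (c : Chan) (ds : List Chan)
  | tau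
  | alloc
  | free (c : Chan)
  | env

/-- The pre-LTS over triples Γ ◃ M ▹ P. -/
inductive PreStep : TyEnv → System → Act → ℤ → TyEnv → System → Prop
  | lOut {Γ Δ : TyEnv} {c : Chan} {ts : List Ty} {a : Attr} {ds : List Chan}
      {P : Proc} {M : Finset Chan} :
      predEnv (.ch c) ts a = some Δ → ds.length = ts.length →
      PreStep (Γ + {(Ident.ch c, Ty.chan ts a)})
        ⟨M, .output (.ch c) (ds.map Ident.ch) P⟩ (.out c ds) 0
        (Γ + Δ + Multiset.ofList ((ds.map Ident.ch).zip ts)) ⟨M, P⟩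
  | lIn {Γ Δ : TyEnv} {c : Chan} {ts : List Ty} {a : Attr} {ds : List Chan}
      {xs : List Var} {P : Proc} {M : Finset Chan} :
      predEnv (.ch c) ts a = some Δ → ds.length = ts.length → xs.length = ds.length →
      PreStep (Γ + {(Ident.ch c, Ty.chan ts a)} + Multiset.ofList ((ds.map Ident.ch).zip ts))
        ⟨M, .input (.ch c) xs P⟩ (.inp c ds) 0
        (Γ + Δ) ⟨M, P.subst (substOf xs ds)⟩
  | lComL {Γ₁ Γ₁' Γ₂ Γ₂' Γ : TyEnv} {M : Finset Chan} {c : Chan} {ds : List Chan}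
      {P P' Q Q' : Proc} :
      PreStep Γ₁ ⟨M, P⟩ (.out c ds) 0 Γ₁' ⟨M, P'⟩ →
      PreStep Γ₂ ⟨M, Q⟩ (.inp c ds) 0 Γ₂' ⟨M, Q'⟩ →
      PreStep Γ ⟨M, .par P Q⟩ .tau 0 Γ ⟨M, .par P' Q'⟩
  | lComR {Γ₁ Γ₁' Γ₂ Γ₂' Γ : TyEnv} {M : Finset Chan} {c : Chan} {ds : List Chan}
      {P P' Q Q' : Proc} :
      PreStep Γ₁ ⟨M, Q⟩ (.out c ds) 0 Γ₁' ⟨M, Q'⟩ →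
      PreStep Γ₂ ⟨M, P⟩ (.inp c ds) 0 Γ₂' ⟨M, P'⟩ →
      PreStep Γ ⟨M, .par P Q⟩ .tau 0 Γ ⟨M, .par P' Q'⟩
  | lParL {Γ Γ' : TyEnv} {M M' : Finset Chan} {P P' Q : Proc} {μ : Act} {k : ℤ} :
      PreStep Γ ⟨M, P⟩ μ k Γ' ⟨M', P'⟩ →
      PreStep Γ ⟨M, .par P Q⟩ μ k Γ' ⟨M', .par P' Q⟩
  | lParR {Γ Γ' : TyEnv} {M M' : Finset Chan} {P Q Q' : Proc} {μ : Act} {k : ℤ} :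
      PreStep Γ ⟨M, Q⟩ μ k Γ' ⟨M', Q'⟩ →
      PreStep Γ ⟨M, .par P Q⟩ μ k Γ' ⟨M', .par P Q'⟩
  | lStr {Γ Γ' : TyEnv} {M : Finset Chan} {P : Proc} :
      EnvStruct Γ Γ' → PreStep Γ ⟨M, P⟩ .env 0 Γ' ⟨M, P⟩
  | lRec {Γ : TyEnv} {M : Finset Chan} {w : Var} {P : Proc} :
      PreStep Γ ⟨M, .recur w P⟩ .tau 0 Γ ⟨M, P.substProc w (.recur w P)⟩
  | lThen {Γ : TyEnv} {M : Finset Chan} {c : Chan} {P Q : Proc} :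
      c ∈ M → PreStep Γ ⟨M, .ifeq (.ch c) (.ch c) P Q⟩ .tau 0 Γ ⟨M, P⟩
  | lElse {Γ : TyEnv} {M : Finset Chan} {c d : Chan} {P Q : Proc} :
      c ∈ M → d ∈ M → c ≠ d →
      PreStep Γ ⟨M, .ifeq (.ch c) (.ch d) P Q⟩ .tau 0 Γ ⟨M, Q⟩
  | lAll {Γ : TyEnv} {M : Finset Chan} {c : Chan} {x : Var} {P : Proc} :
      c ∉ M →
      PreStep Γ ⟨M, .alloc x P⟩ .tau 1 Γ ⟨insert c M, P.subst (substOf [x] [c])⟩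
  | lAllE {Γ : TyEnv} {M : Finset Chan} {c : Chan} {ts : List Ty} {P : Proc} :
      c ∉ M →
      PreStep Γ ⟨M, P⟩ .alloc 1 (Γ + {(Ident.ch c, Ty.chan ts (.unq 0))}) ⟨insert c M, P⟩
  | lFree {Γ : TyEnv} {M : Finset Chan} {c : Chan} {P : Proc} :
      c ∉ M → PreStep Γ ⟨insert c M, .free (.ch c) P⟩ .tau (-1) Γ ⟨M, P⟩
  | lFreeE {Γ : TyEnv} {M : Finset Chan} {c : Chan} {ts : List Ty} {P : Proc} :
      c ∉ M →
      PreStep (Γ + {(Ident.ch c, Ty.chan ts (.unq 0))}) ⟨insert c M, P⟩ (.free c) (-1) Γ ⟨M, P⟩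

/-- The costed LTS: the pre-LTS closed under renamings that are invisible to
the observer (rule lRen). -/
def Step (Γ : TyEnv) (S : System) (μ : Act) (k : ℤ) (Γ' : TyEnv) (S' : System) : Prop :=
  ∃ σ : Equiv.Perm Chan, (∀ c ∈ TyEnv.domChans Γ, σ c = c) ∧
    PreStep Γ (S.rename ⇑σ) μ k Γ' S'

/-- Weak (cost-accumulating) transitions. -/
inductive Weak : TyEnv → System → Act → ℤ → TyEnv → System → Prop
  | single {Γ Γ' : TyEnv} {S S' : System} {μ : Act} {k : ℤ} :
      Step Γ S μ k Γ' S' → Weak Γ S μ k Γ' S'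
  | tauLeft {Γ Γ₁ Γ' : TyEnv} {S S₁ S' : System} {μ : Act} {l k : ℤ} :
      Step Γ S .tau l Γ₁ S₁ → Weak Γ₁ S₁ μ k Γ' S' → Weak Γ S μ (l + k) Γ' S'
  | tauRight {Γ Γ₁ Γ' : TyEnv} {S S₁ S' : System} {μ : Act} {l k : ℤ} :
      Weak Γ S μ l Γ₁ S₁ → Step Γ₁ S₁ .tau k Γ' S' → Weak Γ S μ (l + k) Γ' S'

/-- Weak μ̂ transition: for μ = τ the matching move may be empty. -/
def WeakHat (Γ : TyEnv) (S : System) (μ : Act) (k : ℤ) (Γ' : TyEnv) (S' : System) : Prop :=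
  Weak Γ S μ k Γ' S' ∨ (μ = .tau ∧ k = 0 ∧ Γ' = Γ ∧ S' = S)

/-- Amortised type-indexed relations on systems. -/
abbrev ARel := TyEnv → ℕ → System → System → Prop

/-- Both related triples must be configurations. -/
def IsAmortisedRel (R : ARel) : Prop :=
  ∀ Γ n S T, R Γ n S T → IsConfig Γ S ∧ IsConfig Γ T

/-- Amortised typed bisimulation. -/
def IsAmortisedBisim (R : ARel) : Prop :=
  IsAmortisedRel R ∧
  ∀ Γ n S T, R Γ n S T →
    (∀ μ k Γ' S', Step Γ S μ k Γ' S' →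
      ∃ (T' : System) (l : ℤ) (m : ℕ), WeakHat Γ T μ l Γ' T' ∧ (m : ℤ) = (n : ℤ) + l - k ∧ R Γ' m S' T') ∧
    (∀ μ l Γ' T', Step Γ T μ l Γ' T' →
      ∃ (S' : System) (k : ℤ) (m : ℕ), WeakHat Γ S μ k Γ' S' ∧ (m : ℤ) = (n : ℤ) + l - k ∧ R Γ' m S' T')

/-- Amortised bisimilarity at Γ with credit n : Γ ⊨ S ≲ⁿ T. -/
def Bisim (Γ : TyEnv) (n : ℕ) (S T : System) : Prop :=
  ∃ R : ARel, IsAmortisedBisim R ∧ R Γ n S T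

/-- Γ ⊨ S ≲ T : bisimilarity at some credit. -/
def BisimAny (Γ : TyEnv) (S T : System) : Prop := ∃ n, Bisim Γ n S T

/-- Bounded by m : every credit occurring in the relation is at most m. -/
def BoundedBy (R : ARel) (m : ℕ) : Prop := ∀ Γ n S T, R Γ n S T → n ≤ m

/-- Γ ⊨^m S ≲ T : related by some m-bounded amortised typed bisimulation. -/
def BoundedBisim (m : ℕ) (Γ : TyEnv) (S T : System) : Prop :=
  ∃ (R : ARel) (n : ℕ), IsAmortisedBisim R ∧ BoundedBy R m ∧ n ≤ m ∧ R Γ n S T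

/-- Barbs: (Γ ◃ M ▹ P) ⇓ c. -/
def Barb (Γ : TyEnv) (S : System) (c : Chan) : Prop :=
  (∃ (k : ℤ) (M' : Finset Chan) (R P' : Proc) (ds : List Ident) (P'' : Proc),
      RedStar S k ⟨M', R⟩ ∧ StructEq R (.par P' (.output (.ch c) ds P''))) ∧
  c ∈ TyEnv.domChans Γ

def BarbPreserving (R : ARel) : Prop :=
  ∀ Γ n S T, R Γ n S T → ∀ c, (Barb Γ S c ↔ Barb Γ T c)

def CostImproving (R : ARel) : Prop :=
  ∀ Γ n S T, R Γ n S T →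
    (∀ (k : ℤ) (S' : System), Red S k S' →
      ∃ (l : ℤ) (T' : System) (m : ℕ),
        RedStar T l T' ∧ (m : ℤ) = (n : ℤ) + l - k ∧ R Γ m S' T') ∧
    (∀ (l : ℤ) (T' : System), Red T l T' →
      ∃ (k : ℤ) (S' : System) (m : ℕ),
        RedStar S k S' ∧ (m : ℤ) = (n : ℤ) + l - k ∧ R Γ m S' T')

def FullyContextual (R : ARel) : Prop :=
  ∀ Γ n S T, R Γ n S T →
    (∀ (c : Chan) (ts : List Ty), c ∉ S.res → c ∉ T.res →
      R (Γ + {(Ident.ch c, Ty.chan ts (.unq 0))}) n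
        ⟨insert c S.res, S.proc⟩ ⟨insert c T.res, T.proc⟩) ∧
    (∀ (Γ₁ Γ₂ : TyEnv) (R₀ : Proc), EnvStruct Γ (Γ₁ + Γ₂) → HasTy Γ₂ R₀ →
      R Γ₁ n ⟨S.res, .par S.proc R₀⟩ ⟨T.res, .par T.proc R₀⟩ ∧
      R Γ₁ n ⟨S.res, .par R₀ S.proc⟩ ⟨T.res, .par R₀ T.proc⟩)

def IsContextualFamily (R : ARel) : Prop :=
  IsAmortisedRel R ∧ BarbPreserving R ∧ CostImproving R ∧ FullyContextual R

/-- The behavioural contextual preorder Γ ⊨ S ⊑ⁿ T. -/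
def CtxPre (Γ : TyEnv) (n : ℕ) (S T : System) : Prop :=
  ∃ R : ARel, IsContextualFamily R ∧ R Γ n S T

def CtxPreAny (Γ : TyEnv) (S T : System) : Prop := ∃ n, CtxPre Γ n S T
/-! ## Auxiliary lemmas -/

namespace StructEq

/-- swap the middle components of a 4-way parallel composition -/
theorem swapMid (a b c d : Proc) :
    StructEq (.par (.par a b) (.par c d)) (.par (.par a c) (.par b d)) := by
  refine .trans (.symm (.assoc a b (.par c d))) ?_
  refine .trans (.parCong (.refl a) (.assoc b c d)) ?_
  refine .trans (.parCong (.refl a) (.parCong (.comm b c) (.refl d))) ?_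
  refine .trans (.parCong (.refl a) (.symm (.assoc c b d))) ?_
  exact .assoc a c (.par b d)

end StructEq

theorem StructEq.freeVars (h : StructEq P Q) : P.freeVars = Q.freeVars := by
  induction h <;> simp_all [Proc.freeVars] <;> ac_rfl

theorem StructEq.chans_eq (h : StructEq P Q) : P.chans = Q.chans := by
  induction h <;> simp_all [Proc.chans] <;> ac_rfl

@[simp] theorem Ident.rename_id (u : Ident) : Ident.rename id u = u := by
  cases u <;> rfl

@[simp] theorem Proc.rename_id (P : Proc) : Proc.rename id P = P := by
  induction P <;> simp_all [Proc.rename]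
  all_goals { try { induction ‹List Ident› <;> simp_all } }

theorem Ident.rename_comp (f g : Chan → Chan) (u : Ident) :
    Ident.rename g (Ident.rename f u) = Ident.rename (g ∘ f) u := by
  cases u <;> rfl

theorem Proc.rename_comp (f g : Chan → Chan) (P : Proc) :
    Proc.rename g (Proc.rename f P) = Proc.rename (g ∘ f) P := by
  induction P <;> simp_all [Proc.rename, Ident.rename_comp, Function.comp]

theorem System.rename_id (S : System) : S.rename id = S := by
  cases S; simp [System.rename]

theorem System.rename_comp (f g : Chan → Chan) (S : System) :
    (S.rename f).rename g = S.rename (g ∘ f) := by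
  cases S; simp [System.rename, Proc.rename_comp, Finset.image_image]

theorem StructEq.rename (σ : Chan → Chan) (h : StructEq P Q) :
    StructEq (P.rename σ) (Q.rename σ) := by
  induction h with
  | refl => exact .refl _
  | symm _ ih => exact .symm ih
  | trans _ _ ih1 ih2 => exact .trans ih1 ih2
  | comm => exact .comm _ _
  | assoc => exact .assoc _ _ _
  | nil => exact .nil _
  | parCong _ _ ih1 ih2 => exact .parCong ih1 ih2

theorem Proc.freeVars_rename (σ : Chan → Chan) (P : Proc) :
    (P.rename σ).freeVars = P.freeVars := by
  have hid : ∀ u : Ident, (Ident.rename σ u).vars = u.vars := by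
    intro u; cases u <;> rfl
  have hl : ∀ l : List Ident, listVars (l.map (Ident.rename σ)) = listVars l := by
    intro l; ext x; simp [listVars, hid]
  induction P <;> simp_all [Proc.rename, Proc.freeVars]

theorem Proc.chans_rename (σ : Chan → Chan) (P : Proc) :
    (P.rename σ).chans ⊆ σ '' P.chans := by
  have hid : ∀ u : Ident, (Ident.rename σ u).chans ⊆ σ '' u.chans := by
    intro u; cases u <;> simp [Ident.rename, Ident.chans]
  have hl : ∀ l : List Ident, listChans (l.map (Ident.rename σ)) ⊆ σ '' listChans l := by
    intro l c hc
    obtain ⟨u, hu, hcu⟩ := hc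
    simp only [List.mem_map] at hu
    obtain ⟨v, hv, rfl⟩ := hu
    obtain ⟨c₀, hc₀, rfl⟩ := hid v hcu
    exact ⟨c₀, ⟨v, hv, hc₀⟩, rfl⟩
  induction P with
  | output u vs P ih =>
      simp only [Proc.rename, Proc.chans, Set.image_union]
      exact Set.union_subset_union (Set.union_subset_union (hid u) (hl vs)) ih
  | input u xs P ih =>
      simp only [Proc.rename, Proc.chans, Set.image_union]
      exact Set.union_subset_union (hid u) ih
  | nil => simp [Proc.rename, Proc.chans]
  | ifeq u v P Q ihP ihQ =>
      simp only [Proc.rename, Proc.chans, Set.image_union]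
      exact Set.union_subset_union (Set.union_subset_union
        (Set.union_subset_union (hid u) (hid v)) ihP) ihQ
  | recur w P ih => simpa [Proc.rename, Proc.chans] using ih
  | pvar w => simp [Proc.rename, Proc.chans]
  | par P Q ihP ihQ =>
      simp only [Proc.rename, Proc.chans, Set.image_union]
      exact Set.union_subset_union ihP ihQ
  | alloc x P ih => simpa [Proc.rename, Proc.chans] using ih
  | free u P ih =>
      simp only [Proc.rename, Proc.chans, Set.image_union]
      exact Set.union_subset_union (hid u) ih
theorem Ident.subst_rename (σ : Var → Option Chan) (ρ : Chan → Chan) (u : Ident) :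
    Ident.rename ρ (Ident.subst σ u) =
      Ident.subst (fun x => (σ x).map ρ) (Ident.rename ρ u) := by
  cases u with
  | ch c => rfl
  | var x =>
      simp only [Ident.subst, Ident.rename]
      cases σ x <;> rfl

theorem Proc.subst_rename (ρ : Chan → Chan) (P : Proc) :
    ∀ σ : Var → Option Chan,
    Proc.rename ρ (Proc.subst σ P) =
      Proc.subst (fun x => (σ x).map ρ) (Proc.rename ρ P) := by
  induction P with
  | output u vs P ih =>
      intro σ
      simp [Proc.subst, Proc.rename, ih, Ident.subst_rename, Function.comp]
  | input u xs P ih =>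
      intro σ
      simp only [Proc.subst, Proc.rename, Ident.subst_rename, ih]
      congr 1
      · apply congrFun; apply congrArg
        funext x
        simp [removeVars]
        split <;> rfl
  | nil => intro σ; rfl
  | ifeq u v P Q ihP ihQ =>
      intro σ; simp [Proc.subst, Proc.rename, ihP, ihQ, Ident.subst_rename]
  | recur w P ih =>
      intro σ
      simp only [Proc.subst, Proc.rename, ih]
      congr 1
      apply congrFun; apply congrArg
      funext x
      simp [removeVars]
      split <;> rfl
  | pvar w => intro σ; rfl
  | par P Q ihP ihQ => intro σ; simp [Proc.subst, Proc.rename, ihP, ihQ]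
  | alloc x P ih =>
      intro σ
      simp only [Proc.subst, Proc.rename, ih]
      congr 1
      apply congrFun; apply congrArg
      funext y
      simp [removeVars]
      split <;> rfl
  | free u P ih =>
      intro σ; simp [Proc.subst, Proc.rename, ih, Ident.subst_rename]

theorem substOf_map (ρ : Chan → Chan) (xs : List Var) :
    ∀ (ds : List Chan) (x : Var),
      (substOf xs ds x).map ρ = substOf xs (ds.map ρ) x := by
  induction xs with
  | nil => intro ds x; simp [substOf]
  | cons y ys ih =>
      intro ds x
      cases ds with
      | nil => simp [substOf]
      | cons d ds' =>
          simp only [substOf, List.map_cons, List.zip_cons_cons, List.lookup]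
          by_cases hxy : x = y
          · simp [hxy]
          · have : (x == y) = false := by simp [hxy]
            simp only [this]
            exact ih ds' x

theorem Proc.substOf_rename (ρ : Chan → Chan) (xs : List Var) (ds : List Chan) (P : Proc) :
    Proc.rename ρ (Proc.subst (substOf xs ds) P) =
      Proc.subst (substOf xs (ds.map ρ)) (Proc.rename ρ P) := by
  rw [Proc.subst_rename]
  congr 1
  funext x
  exact substOf_map ρ xs ds x

theorem Proc.substProc_rename (ρ : Chan → Chan) (w : Var) (R : Proc) (P : Proc) :
    Proc.rename ρ (Proc.substProc w R P) =
      Proc.substProc w (Proc.rename ρ R) (Proc.rename ρ P) := by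
  induction P <;> simp [Proc.substProc, Proc.rename, *] <;> split <;>
    simp [Proc.substProc, Proc.rename, *]

theorem Red.rename (σ : Equiv.Perm Chan) (h : Red S k S') :
    Red (S.rename σ) k (S'.rename σ) := by
  induction h with
  | @com M c ds xs P Q hc hlen =>
      have : Red ⟨M.image σ, .par (.output (.ch (σ c)) ((ds.map σ).map Ident.ch)
          (P.rename σ)) (.input (.ch (σ c)) xs (Q.rename σ))⟩ 0
          ⟨M.image σ, .par (P.rename σ) ((Q.rename σ).subst (substOf xs (ds.map σ)))⟩ :=
        Red.com (Finset.mem_image_of_mem σ hc) (by simpa using hlen)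
      have hcomp : (Ident.rename σ ∘ Ident.ch) = Ident.ch ∘ σ := rfl
      simpa [System.rename, Proc.rename, Ident.rename, List.map_map, Function.comp,
        Proc.substOf_rename, hcomp] using this
  | ifThen hc =>
      exact Red.ifThen (Finset.mem_image_of_mem σ hc)
  | ifElse hc hd hne =>
      exact Red.ifElse (Finset.mem_image_of_mem σ hc) (Finset.mem_image_of_mem σ hd)
        (fun he => hne (σ.injective he))
  | unfold =>
      have := @Red.unfold (Finset.image σ ‹System›.res) ‹_› ‹_›
      simpa [System.rename, Proc.rename, Proc.substProc_rename] using Red.unfold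
  | @alloc M c x P hc =>
      have hnc : σ c ∉ M.image σ := by
        intro hmem
        obtain ⟨c', hc', he⟩ := Finset.mem_image.mp hmem
        exact hc (σ.injective he ▸ hc')
      have : Red ⟨M.image σ, .alloc x (P.rename σ)⟩ 1
          ⟨insert (σ c) (M.image σ), (P.rename σ).subst (substOf [x] [σ c])⟩ :=
        Red.alloc hnc
      simpa [System.rename, Proc.rename, Finset.image_insert, Proc.substOf_rename] using this
  | @free M c P hc =>
      have : Red ⟨M.image σ, .free (.ch (σ c)) (P.rename σ)⟩ (-1)
          ⟨(M.image σ).erase (σ c), P.rename σ⟩ :=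
        Red.free (Finset.mem_image_of_mem σ hc)
      simpa [System.rename, Proc.rename, Ident.rename, Finset.image_erase σ.injective] using this
  | str h1 _ h2 ih =>
      exact Red.str (h1.rename σ) ih (h2.rename σ)
  | parL _ ih => exact Red.parL ih
  | parR _ ih => exact Red.parR ih

theorem RedStar.rename (σ : Equiv.Perm Chan) (h : RedStar S k S') :
    RedStar (S.rename σ) k (S'.rename σ) := by
  induction h with
  | refl => exact RedStar.refl _
  | step h1 h2 ih => exact RedStar.step ih (h2.rename σ)

theorem RedStar.head (h1 : Red S l S') (h2 : RedStar S' k S'') :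
    RedStar S (l + k) S'' := by
  induction h2 with
  | refl => simpa using RedStar.step (RedStar.refl S) h1
  | @step _ _ _ _ _ h4 ih =>
      have := RedStar.step ih h4
      convert this using 1
      ring
theorem EnvStruct.addLeft (C : TyEnv) (h : EnvStruct A B) : EnvStruct (C + A) (C + B) := by
  induction h with
  | refl => exact .refl _
  | trans _ _ ih1 ih2 => exact .trans ih1 ih2
  | con hs => rw [← add_assoc, ← add_assoc]; exact .con hs
  | join hs => rw [← add_assoc, ← add_assoc]; exact .join hs
  | weak Γ u T => rw [← add_assoc]; exact .weak _ u T
  | tyEq he => rw [← add_assoc, ← add_assoc]; exact .tyEq he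
  | sub hs => rw [← add_assoc, ← add_assoc]; exact .sub hs
  | rev Γ u ts₁ ts₂ => rw [← add_assoc, ← add_assoc]; exact .rev _ u ts₁ ts₂

theorem mem_domChans_add {c : Chan} {A B : TyEnv} :
    c ∈ TyEnv.domChans (A + B) ↔ c ∈ TyEnv.domChans A ∨ c ∈ TyEnv.domChans B := by
  simp only [TyEnv.domChans, Set.mem_setOf_eq, Multiset.mem_add]
  constructor
  · rintro ⟨T, h | h⟩
    · exact .inl ⟨T, h⟩
    · exact .inr ⟨T, h⟩
  · rintro (⟨T, h⟩ | ⟨T, h⟩)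
    · exact ⟨T, .inl h⟩
    · exact ⟨T, .inr h⟩

theorem mem_domChans_pair {c : Chan} {u : Ident} {T : Ty} :
    c ∈ TyEnv.domChans ({(u, T)} : TyEnv) ↔ u = .ch c := by
  simp only [TyEnv.domChans, Set.mem_setOf_eq, Multiset.mem_singleton]
  constructor
  · rintro ⟨T', h⟩; exact (Prod.mk.injEq _ _ _ _ ▸ h).1.symm ▸ rfl
  · rintro rfl; exact ⟨T, rfl⟩

theorem EnvStruct.domChans_subset (h : EnvStruct Γ Γ') :
    TyEnv.domChans Γ' ⊆ TyEnv.domChans Γ := by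
  induction h with
  | refl => exact subset_rfl
  | trans _ _ ih1 ih2 => exact ih2.trans ih1
  | _ =>
      intro c hc
      simp only [TyEnv.domChans, Set.mem_setOf_eq, Multiset.mem_add,
        Multiset.insert_eq_cons, Multiset.mem_cons, Multiset.mem_singleton,
        Prod.mk.injEq] at hc ⊢
      aesop

theorem hasTy_nil_envStruct (h : HasTy Γ P) (hP : P = .nil) : EnvStruct Γ 0 := by
  induction h with
  | nil => exact .refl 0
  | str _ hes ih => exact .trans hes (ih hP)
  | _ => exact absurd hP (by simp)

theorem hasTy_par_inv (h : HasTy Γ P) :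
    ∀ A B, P = .par A B →
      ∃ Γ₁ Γ₂, EnvStruct Γ (Γ₁ + Γ₂) ∧ HasTy Γ₁ A ∧ HasTy Γ₂ B := by
  induction h with
  | par h1 h2 =>
      intro A B hAB
      injection hAB with e1 e2
      exact ⟨_, _, .refl _, e1 ▸ h1, e2 ▸ h2⟩
  | str _ hes ih =>
      intro A B hAB
      obtain ⟨Γ₁, Γ₂, hs, h1, h2⟩ := ih A B hAB
      exact ⟨Γ₁, Γ₂, .trans hes hs, h1, h2⟩
  | _ => intro A B hAB; exact absurd hAB (by simp)

theorem hasTy_structEq (h : StructEq P Q) : ∀ Γ, HasTy Γ P ↔ HasTy Γ Q := by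
  induction h with
  | refl => intro Γ; rfl
  | symm _ ih => intro Γ; exact (ih Γ).symm
  | trans _ _ ih1 ih2 => intro Γ; exact (ih1 Γ).trans (ih2 Γ)
  | comm A B =>
      intro Γ
      constructor <;>
      · intro h
        obtain ⟨Γ₁, Γ₂, hs, h1, h2⟩ := hasTy_par_inv h _ _ rfl
        exact .str (.par h2 h1) (add_comm Γ₁ Γ₂ ▸ hs)
  | assoc A B C =>
      intro Γ
      constructor
      · intro h
        obtain ⟨Γ₁, Γ₂, hs, h1, h2⟩ := hasTy_par_inv h _ _ rfl
        obtain ⟨Γ₃, Γ₄, hs', h3, h4⟩ := hasTy_par_inv h2 _ _ rfl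
        refine .str (.par (.par h1 h3) h4) ?_
        refine .trans hs (.trans (EnvStruct.addLeft Γ₁ hs') ?_)
        rw [← add_assoc]
        exact .refl _
      · intro h
        obtain ⟨Γ₁, Γ₂, hs, h1, h2⟩ := hasTy_par_inv h _ _ rfl
        obtain ⟨Γ₃, Γ₄, hs', h3, h4⟩ := hasTy_par_inv h1 _ _ rfl
        refine .str (.par h3 (.par h4 h2)) (.trans hs ?_)
        have := EnvStruct.addLeft Γ₂ hs'
        rw [add_comm Γ₂ Γ₁, add_comm Γ₂ (Γ₃ + Γ₄)] at this
        exact add_assoc Γ₃ Γ₄ Γ₂ ▸ this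
  | nil A =>
      intro Γ
      constructor
      · intro h
        obtain ⟨Γ₁, Γ₂, hs, h1, h2⟩ := hasTy_par_inv h _ _ rfl
        have h0 : EnvStruct Γ₂ 0 := hasTy_nil_envStruct h2 rfl
        refine .str h1 (.trans hs ?_)
        have := EnvStruct.addLeft Γ₁ h0
        simpa using this
      · intro h
        have : HasTy (Γ + 0) (.par A .nil) := .par h .nil
        simpa using this
  | parCong hPP' hQQ' ih1 ih2 =>
      intro Γ
      constructor
      · intro h
        obtain ⟨Γ₁, Γ₂, hs, h1, h2⟩ := hasTy_par_inv h _ _ rfl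
        exact .str (.par ((ih1 Γ₁).mp h1) ((ih2 Γ₂).mp h2)) hs
      · intro h
        obtain ⟨Γ₁, Γ₂, hs, h1, h2⟩ := hasTy_par_inv h _ _ rfl
        exact .str (.par ((ih1 Γ₁).mpr h1) ((ih2 Γ₂).mpr h2)) hs
theorem predEnv_domChans {u : Ident} {ts : List Ty} {a : Attr} {Δ : TyEnv}
    (h : predEnv u ts a = some Δ) :
    TyEnv.domChans Δ ⊆ TyEnv.domChans ({(u, Ty.chan ts a)} : TyEnv) := by
  cases a with
  | unr =>
      simp only [predEnv, Option.some.injEq] at h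
      subst h
      intro c hc
      rw [mem_domChans_pair] at hc ⊢
      exact hc
  | aff =>
      simp only [predEnv, Option.some.injEq] at h
      subst h
      intro c hc
      exact absurd hc (by simp [TyEnv.domChans])
  | unq i =>
      cases i with
      | zero => simp [predEnv] at h
      | succ j =>
          simp only [predEnv, Option.some.injEq] at h
          subst h
          intro c hc
          rw [mem_domChans_pair] at hc ⊢
          exact hc

theorem zip_mem_of_mem {α β : Type} {v : α} {vs : List α} {ts : List β}
    (hlen : vs.length = ts.length) (hv : v ∈ vs) : ∃ T, (v, T) ∈ vs.zip ts := by
  induction vs generalizing ts with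
  | nil => simp at hv
  | cons a as ih =>
      cases ts with
      | nil => simp at hlen
      | cons b bs =>
          rcases List.mem_cons.mp hv with rfl | hv'
          · exact ⟨b, List.mem_cons_self⟩
          · obtain ⟨T, hT⟩ := ih (by simpa using hlen) hv'
            exact ⟨T, List.mem_cons_of_mem _ hT⟩

theorem HasTy.chans_subset (h : HasTy Γ P) : P.chans ⊆ TyEnv.domChans Γ := by
  induction h with
  | @out Γ Δ u ts a vs P hpred hlen _ ih =>
      intro c hc
      rcases hc with (hc | hc) | hc
      · rw [mem_domChans_add]
        refine .inl (mem_domChans_add.mpr (.inr ?_))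
        rw [mem_domChans_pair]
        cases u with
        | ch c' => simpa [Ident.chans] using hc.symm ▸ rfl
        | var x => exact absurd hc (by simp [Ident.chans])
      · obtain ⟨v, hv, hcv⟩ := hc
        cases v with
        | var x => exact absurd hcv (by simp [Ident.chans])
        | ch c' =>
            simp only [Ident.chans, Set.mem_singleton_iff] at hcv
            subst hcv
            obtain ⟨T, hT⟩ := zip_mem_of_mem hlen hv
            rw [mem_domChans_add]
            exact .inr ⟨T, by simpa using hT⟩
      · have := ih hc
        rcases mem_domChans_add.mp this with h1 | h1
        · exact mem_domChans_add.mpr (.inl (mem_domChans_add.mpr (.inl h1)))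
        · exact mem_domChans_add.mpr (.inl (mem_domChans_add.mpr
            (.inr (predEnv_domChans hpred h1))))
  | @inp Γ Δ u ts a xs P hpred hlen _ ih =>
      intro c hc
      rcases hc with hc | hc
      · rw [mem_domChans_add]
        refine .inr ?_
        rw [mem_domChans_pair]
        cases u with
        | ch c' => simpa [Ident.chans] using hc.symm ▸ rfl
        | var x => exact absurd hc (by simp [Ident.chans])
      · have := ih hc
        rcases mem_domChans_add.mp this with h1 | h1
        · rcases mem_domChans_add.mp h1 with h2 | h2
          · exact mem_domChans_add.mpr (.inl h2)
          · exact mem_domChans_add.mpr (.inr (predEnv_domChans hpred h2))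
        · exfalso
          obtain ⟨T, hT⟩ := h1
          rw [Multiset.mem_coe] at hT
          have := List.of_mem_zip hT
          simp only [List.mem_map] at this
          obtain ⟨x, _, hx⟩ := this.1
          exact Ident.noConfusion hx
  | par _ _ ih1 ih2 =>
      intro c hc
      rcases hc with hc | hc
      · exact mem_domChans_add.mpr (.inl (ih1 hc))
      · exact mem_domChans_add.mpr (.inr (ih2 hc))
  | @ifeq Γ u v P Q hu hv _ _ ih1 ih2 =>
      intro c hc
      rcases hc with ((hc | hc) | hc) | hc
      · cases u with
        | ch c' =>
            simp only [Ident.chans, Set.mem_singleton_iff] at hc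
            subst hc
            exact hu
        | var x => exact absurd hc (by simp [Ident.chans])
      · cases v with
        | ch c' =>
            simp only [Ident.chans, Set.mem_singleton_iff] at hc
            subst hc
            exact hv
        | var x => exact absurd hc (by simp [Ident.chans])
      · exact ih1 hc
      · exact ih2 hc
  | @recur Γ w P _ _ ih =>
      intro c hc
      rcases mem_domChans_add.mp (ih hc) with h1 | h1
      · exact h1
      · rw [mem_domChans_pair] at h1; exact Ident.noConfusion h1
  | pvar w => intro c hc; exact absurd hc (by simp [Proc.chans])
  | @free Γ P u ts _ ih =>
      intro c hc
      rcases hc with hc | hc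
      · rw [mem_domChans_add]
        refine .inr ?_
        rw [mem_domChans_pair]
        cases u with
        | ch c' => simpa [Ident.chans] using hc.symm ▸ rfl
        | var x => exact absurd hc (by simp [Ident.chans])
      · exact mem_domChans_add.mpr (.inl (ih hc))
  | @alloc Γ x ts P _ ih =>
      intro c hc
      rcases mem_domChans_add.mp (ih hc) with h1 | h1
      · exact h1
      · rw [mem_domChans_pair] at h1; exact Ident.noConfusion h1
  | nil => intro c hc; exact absurd hc (by simp [Proc.chans])
  | str _ hes ih => exact fun c hc => hes.domChans_subset (ih hc)
theorem TyEnv.rename_add (A B : TyEnv) (σ : Chan → Chan) :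
    (A + B).rename σ = A.rename σ + B.rename σ := Multiset.map_add _ _ _

theorem TyEnv.rename_singleton (u : Ident) (T : Ty) (σ : Chan → Chan) :
    (({(u, T)} : TyEnv)).rename σ = ({(u.rename σ, T)} : TyEnv) := by
  simp [TyEnv.rename]

theorem TyEnv.rename_pair (u : Ident) (T₁ T₂ : Ty) (σ : Chan → Chan) :
    (({(u, T₁), (u, T₂)} : TyEnv)).rename σ =
      ({(u.rename σ, T₁), (u.rename σ, T₂)} : TyEnv) := by
  simp [TyEnv.rename]

theorem EnvStruct.rename (σ : Chan → Chan) (h : EnvStruct A B) :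
    EnvStruct (A.rename σ) (B.rename σ) := by
  induction h with
  | refl => exact .refl _
  | trans _ _ ih1 ih2 => exact .trans ih1 ih2
  | con hs =>
      rw [TyEnv.rename_add, TyEnv.rename_add, TyEnv.rename_singleton, TyEnv.rename_pair]
      exact .con hs
  | join hs =>
      rw [TyEnv.rename_add, TyEnv.rename_add, TyEnv.rename_singleton, TyEnv.rename_pair]
      exact .join hs
  | weak Γ u T =>
      rw [TyEnv.rename_add, TyEnv.rename_singleton]
      exact .weak _ _ _
  | tyEq he =>
      rw [TyEnv.rename_add, TyEnv.rename_add, TyEnv.rename_singleton, TyEnv.rename_singleton]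
      exact .tyEq he
  | sub hs =>
      rw [TyEnv.rename_add, TyEnv.rename_add, TyEnv.rename_singleton, TyEnv.rename_singleton]
      exact .sub hs
  | rev Γ u ts₁ ts₂ =>
      rw [TyEnv.rename_add, TyEnv.rename_add, TyEnv.rename_singleton, TyEnv.rename_singleton]
      exact .rev _ _ _ _

theorem predEnv_rename (σ : Chan → Chan) {u : Ident} {ts : List Ty} {a : Attr} {Δ : TyEnv}
    (h : predEnv u ts a = some Δ) :
    predEnv (u.rename σ) ts a = some (Δ.rename σ) := by
  cases a with
  | unr =>
      simp only [predEnv, Option.some.injEq] at h ⊢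
      subst h; exact (TyEnv.rename_singleton _ _ _).symm
  | aff =>
      simp only [predEnv, Option.some.injEq] at h ⊢
      subst h; rfl
  | unq i =>
      cases i with
      | zero => simp [predEnv] at h
      | succ j =>
          simp only [predEnv, Option.some.injEq] at h ⊢
          subst h; exact (TyEnv.rename_singleton _ _ _).symm

theorem zip_rename (σ : Chan → Chan) (vs : List Ident) (ts : List Ty) :
    TyEnv.rename (Multiset.ofList (vs.zip ts)) σ =
      Multiset.ofList ((vs.map (Ident.rename σ)).zip ts) := by
  have : (vs.map (Ident.rename σ)).zip (ts.map id) =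
      (vs.zip ts).map (Prod.map (Ident.rename σ) id) := List.zip_map
  simp only [List.map_id] at this
  simp only [TyEnv.rename, Multiset.map_coe, this]
  rfl

theorem HasTy.rename (σ : Chan → Chan) (h : HasTy Γ P) :
    HasTy (Γ.rename σ) (P.rename σ) := by
  induction h with
  | @out Γ Δ u ts a vs P hpred hlen _ ih =>
      rw [TyEnv.rename_add, TyEnv.rename_add, TyEnv.rename_singleton, zip_rename]
      rw [TyEnv.rename_add] at ih
      exact HasTy.out (predEnv_rename σ hpred) (by simpa using hlen) ih
  | @inp Γ Δ u ts a xs P hpred hlen _ ih =>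
      rw [TyEnv.rename_add, TyEnv.rename_singleton]
      rw [TyEnv.rename_add, TyEnv.rename_add, zip_rename] at ih
      have hv : ((xs.map Ident.var).map (Ident.rename σ)) = xs.map Ident.var := by
        simp [List.map_map, Function.comp, Ident.rename]
      rw [hv] at ih
      exact HasTy.inp (predEnv_rename σ hpred) hlen ih
  | par _ _ ih1 ih2 =>
      rw [TyEnv.rename_add]
      exact .par ih1 ih2
  | @ifeq Γ u v P Q hu hv _ _ ih1 ih2 =>
      refine .ifeq ?_ ?_ ih1 ih2
      · obtain ⟨T, hT⟩ := hu
        exact ⟨T, Multiset.mem_map_of_mem _ hT⟩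
      · obtain ⟨T, hT⟩ := hv
        exact ⟨T, Multiset.mem_map_of_mem _ hT⟩
  | @recur Γ w P hunr _ ih =>
      refine .recur ?_ ?_
      · intro p hp
        obtain ⟨q, hq, rfl⟩ := Multiset.mem_map.mp hp
        exact hunr q hq
      · rw [TyEnv.rename_add, TyEnv.rename_singleton] at ih
        exact ih
  | pvar w =>
      have : TyEnv.rename ({(Ident.var w, Ty.proc)} : TyEnv) σ =
          ({(Ident.var w, Ty.proc)} : TyEnv) := by simp [TyEnv.rename, Ident.rename]
      rw [this]
      exact .pvar w
  | @free Γ P u ts _ ih =>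
      rw [TyEnv.rename_add, TyEnv.rename_singleton]
      exact .free ih
  | @alloc Γ x ts P _ ih =>
      refine .alloc (ts := ts) ?_
      rw [TyEnv.rename_add, TyEnv.rename_singleton] at ih
      exact ih
  | nil =>
      have : TyEnv.rename (0 : TyEnv) σ = 0 := rfl
      rw [this]; exact .nil
  | str _ hes ih => exact .str ih (hes.rename σ)

theorem Ident.rename_injective {σ : Chan → Chan} (hσ : Function.Injective σ) :
    Function.Injective (Ident.rename σ) := by
  intro u v h
  cases u <;> cases v <;> simp [Ident.rename] at h ⊢
  · exact hσ h
  · exact h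

theorem TyEnv.Consistent.rename {σ : Chan → Chan} (hσ : Function.Injective σ)
    (h : TyEnv.Consistent Γ) : TyEnv.Consistent (Γ.rename σ) := by
  obtain ⟨Γ₀, hpm, hes⟩ := h
  refine ⟨Γ₀.rename σ, ?_, hes.rename σ⟩
  unfold TyEnv.IsPartialMap at hpm ⊢
  have : (Γ₀.rename σ).map Prod.fst = (Γ₀.map Prod.fst).map (Ident.rename σ) := by
    simp [TyEnv.rename, Multiset.map_map, Function.comp]
  rw [this]
  exact hpm.map_on (fun a _ b _ h => Ident.rename_injective hσ h)

theorem domChans_rename {σ : Chan → Chan} {Γ : TyEnv} {c : Chan} :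
    c ∈ TyEnv.domChans (Γ.rename σ) ↔ ∃ c₀ ∈ TyEnv.domChans Γ, σ c₀ = c := by
  simp only [TyEnv.domChans, Set.mem_setOf_eq, TyEnv.rename, Multiset.mem_map]
  constructor
  · rintro ⟨T, ⟨u, T'⟩, hmem, heq⟩
    cases u with
    | ch c₀ =>
        simp only [Ident.rename, Prod.mk.injEq] at heq
        exact ⟨c₀, ⟨T', hmem⟩, (Ident.ch.injEq _ _ ▸ heq.1 : _)⟩
    | var x => exact absurd heq (by simp [Ident.rename])
  · rintro ⟨c₀, ⟨T, hT⟩, rfl⟩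
    exact ⟨T, (Ident.ch c₀, T), hT, rfl⟩

theorem TyEnv.rename_fixed {σ : Chan → Chan} {Γ : TyEnv}
    (hfix : ∀ c ∈ TyEnv.domChans Γ, σ c = c) : Γ.rename σ = Γ := by
  have : Γ.map (fun p => (Ident.rename σ p.1, p.2)) = Γ.map id := by
    apply Multiset.map_congr rfl
    rintro ⟨u, T⟩ hmem
    cases u with
    | ch c => simp [Ident.rename, hfix c ⟨T, hmem⟩]
    | var x => simp [Ident.rename]
  simpa [TyEnv.rename] using this

theorem IsConfig.rename (σ : Equiv.Perm Chan)
    (hfix : ∀ c ∈ TyEnv.domChans Γ, σ c = c) (h : IsConfig Γ S) :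
    IsConfig Γ (S.rename σ) := by
  obtain ⟨hcl, hdom, Δ, hcons, hty, hdomΔ⟩ := h
  refine ⟨?_, ?_, Δ.rename σ, ?_, ?_, ?_⟩
  · unfold Proc.Closed at hcl ⊢
    simpa [System.rename, Proc.freeVars_rename] using hcl
  · intro c hc
    have : σ c = c := hfix c hc
    have hcres : c ∈ S.res := hdom hc
    simp only [System.rename, Finset.coe_image, Set.mem_image]
    exact ⟨c, hcres, this⟩
  · have : Γ + Δ.rename σ = (Γ + Δ).rename σ := by
      rw [TyEnv.rename_add, TyEnv.rename_fixed hfix]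
    rw [this]
    exact hcons.rename σ.injective
  · exact hty.rename σ
  · intro c hc
    obtain ⟨c₀, hc₀, rfl⟩ := domChans_rename.mp hc
    simp only [System.rename, Finset.coe_image, Set.mem_image]
    exact ⟨c₀, hdomΔ hc₀, rfl⟩

theorem IsConfig.structEq {M : Finset Chan} (h : StructEq P Q)
    (hc : IsConfig Γ ⟨M, P⟩) : IsConfig Γ ⟨M, Q⟩ := by
  obtain ⟨hcl, hdom, Δ, hcons, hty, hdomΔ⟩ := hc
  exact ⟨by unfold Proc.Closed at hcl ⊢; rw [← h.freeVars]; exact hcl, hdom,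
    Δ, hcons, (hasTy_structEq h Δ).mp hty, hdomΔ⟩
theorem PreStep.tau_env (h : PreStep Γ S μ k Γ' S') : μ = .tau → Γ' = Γ := by
  induction h <;> intro hμ <;> first
    | rfl
    | (rename_i ih; exact ih hμ)
    | cases hμ

theorem PreStep.out_inv (h : PreStep Γ S μ k Γ' S') :
    ∀ c ds, μ = .out c ds →
      k = 0 ∧ S'.res = S.res ∧
      ∃ P₀ C, StructEq S.proc (.par (.output (.ch c) (ds.map Ident.ch) P₀) C) ∧
        StructEq S'.proc (.par P₀ C) := by
  induction h with
  | @lOut Γ Δ c ts a ds P M hpred hlen =>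
      intro c' ds' hμ
      injection hμ with e1 e2
      subst e1; subst e2
      exact ⟨rfl, rfl, P, .nil, .symm (.nil _), .symm (.nil _)⟩
  | @lParL Γ Γ' M M' P P' Q μ k _ ih =>
      intro c ds hμ
      obtain ⟨hk, hM, P₀, C, h1, h2⟩ := ih c ds hμ
      refine ⟨hk, hM, P₀, .par C Q, ?_, ?_⟩
      · exact .trans (.parCong h1 (.refl Q)) (.symm (.assoc _ _ _))
      · exact .trans (.parCong h2 (.refl Q)) (.symm (.assoc _ _ _))
  | @lParR Γ Γ' M M' P Q Q' μ k _ ih =>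
      intro c ds hμ
      obtain ⟨hk, hM, P₀, C, h1, h2⟩ := ih c ds hμ
      refine ⟨hk, hM, P₀, .par C P, ?_, ?_⟩
      · exact .trans (.comm _ _) (.trans (.parCong h1 (.refl P)) (.symm (.assoc _ _ _)))
      · exact .trans (.comm _ _) (.trans (.parCong h2 (.refl P)) (.symm (.assoc _ _ _)))
  | _ => intro c ds hμ; cases hμ

theorem PreStep.inp_inv (h : PreStep Γ S μ k Γ' S') :
    ∀ c ds, μ = .inp c ds →
      k = 0 ∧ S'.res = S.res ∧
      ∃ xs P₀ C, xs.length = ds.length ∧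
        StructEq S.proc (.par (.input (.ch c) xs P₀) C) ∧
        StructEq S'.proc (.par (P₀.subst (substOf xs ds)) C) := by
  induction h with
  | @lIn Γ Δ c ts a ds xs P M hpred hlen hxs =>
      intro c' ds' hμ
      injection hμ with e1 e2
      subst e1; subst e2
      exact ⟨rfl, rfl, xs, P, .nil, hxs, .symm (.nil _), .symm (.nil _)⟩
  | @lParL Γ Γ' M M' P P' Q μ k _ ih =>
      intro c ds hμ
      obtain ⟨hk, hM, xs, P₀, C, hxs, h1, h2⟩ := ih c ds hμ
      refine ⟨hk, hM, xs, P₀, .par C Q, hxs, ?_, ?_⟩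
      · exact .trans (.parCong h1 (.refl Q)) (.symm (.assoc _ _ _))
      · exact .trans (.parCong h2 (.refl Q)) (.symm (.assoc _ _ _))
  | @lParR Γ Γ' M M' P Q Q' μ k _ ih =>
      intro c ds hμ
      obtain ⟨hk, hM, xs, P₀, C, hxs, h1, h2⟩ := ih c ds hμ
      refine ⟨hk, hM, xs, P₀, .par C P, hxs, ?_, ?_⟩
      · exact .trans (.comm _ _) (.trans (.parCong h1 (.refl P)) (.symm (.assoc _ _ _)))
      · exact .trans (.comm _ _) (.trans (.parCong h2 (.refl P)) (.symm (.assoc _ _ _)))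
  | _ => intro c ds hμ; cases hμ

theorem PreStep.out_chan_mem (h : PreStep Γ S μ k Γ' S') :
    ∀ c ds, μ = .out c ds → c ∈ S.proc.chans := by
  intro c ds hμ
  obtain ⟨_, _, P₀, C, h1, _⟩ := h.out_inv c ds hμ
  rw [h1.chans_eq]
  simp [Proc.chans, Ident.chans]

theorem PreStep.tau_red (h : PreStep Γ S μ k Γ' S') :
    μ = .tau → S.proc.chans ⊆ ↑S.res → Red S k S' := by
  induction h with
  | @lComL Γ₁ Γ₁' Γ₂ Γ₂' Γ M c ds P P' Q Q' hout hin =>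
      intro _ hch
      obtain ⟨_, _, P₀, C₁, ho1, ho2⟩ := hout.out_inv c ds rfl
      obtain ⟨_, _, xs, Q₀, C₂, hxs, hi1, hi2⟩ := hin.inp_inv c ds rfl
      have hc : c ∈ M := by
        apply hch
        exact Set.mem_union_left _ (hout.out_chan_mem c ds rfl)
      have hcom : Red ⟨M, .par (.output (.ch c) (ds.map Ident.ch) P₀) (.input (.ch c) xs Q₀)⟩
          0 ⟨M, .par P₀ (Q₀.subst (substOf xs ds))⟩ := Red.com hc hxs
      refine Red.str ?_ (Red.parL (Q := .par C₁ C₂) hcom) ?_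
      · exact .trans (.parCong ho1 hi1) (StructEq.swapMid _ _ _ _)
      · exact .trans (.symm (StructEq.swapMid _ _ _ _)) (.symm (.parCong ho2 hi2))
  | @lComR Γ₁ Γ₁' Γ₂ Γ₂' Γ M c ds P P' Q Q' hout hin =>
      intro _ hch
      obtain ⟨_, _, Q₀, C₂, ho1, ho2⟩ := hout.out_inv c ds rfl
      obtain ⟨_, _, xs, P₀, C₁, hxs, hi1, hi2⟩ := hin.inp_inv c ds rfl
      have hc : c ∈ M := by
        apply hch
        exact Set.mem_union_right _ (hout.out_chan_mem c ds rfl)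
      have hcom : Red ⟨M, .par (.output (.ch c) (ds.map Ident.ch) Q₀) (.input (.ch c) xs P₀)⟩
          0 ⟨M, .par Q₀ (P₀.subst (substOf xs ds))⟩ := Red.com hc hxs
      refine Red.str ?_ (Red.parL (Q := .par C₁ C₂) hcom) ?_
      · refine .trans (.parCong hi1 ho1) ?_
        refine .trans (StructEq.swapMid _ _ _ _) ?_
        exact .parCong (.comm _ _) (.refl _)
      · refine .trans (.parCong (.comm _ _) (.refl _)) ?_
        refine .trans (.symm (StructEq.swapMid _ _ _ _)) ?_
        exact .symm (.parCong hi2 ho2)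
  | @lParL Γ Γ' M M' P P' Q μ k _ ih =>
      intro hμ hch
      exact Red.parL (ih hμ (fun c hc => hch (Set.mem_union_left _ hc)))
  | @lParR Γ Γ' M M' P Q Q' μ k _ ih =>
      intro hμ hch
      exact Red.parR (ih hμ (fun c hc => hch (Set.mem_union_right _ hc)))
  | lRec => intro _ _; exact Red.unfold
  | lThen hc => intro _ _; exact Red.ifThen hc
  | lElse hc hd hne => intro _ _; exact Red.ifElse hc hd hne
  | lAll hc => intro _ _; exact Red.alloc hc
  | @lFree Γ M c P hc =>
      intro _ _
      have := Red.free (M := insert c M) (c := c) (P := P) (Finset.mem_insert_self c M)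
      rwa [Finset.erase_insert hc] at this
  | _ => intro hμ; cases hμ
/-- `P` can mimic every pre-LTS step of `Q` up to structural equivalence. -/
def StepsLike (P Q : Proc) : Prop :=
  ∀ Γ (M : Finset Chan) μ k Γ' (S' : System),
    PreStep Γ ⟨M, Q⟩ μ k Γ' S' →
    ∃ R', PreStep Γ ⟨M, P⟩ μ k Γ' ⟨S'.res, R'⟩ ∧ StructEq R' S'.proc

theorem stepsLike_trans (h1 : StepsLike P Q) (h2 : StepsLike Q R) : StepsLike P R := by
  intro Γ M μ k Γ' S' h
  obtain ⟨R₁, hs₁, he₁⟩ := h2 Γ M μ k Γ' S' h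
  obtain ⟨R₂, hs₂, he₂⟩ := h1 Γ M μ k Γ' ⟨S'.res, R₁⟩ hs₁
  exact ⟨R₂, hs₂, he₂.trans he₁⟩

theorem stepsLike_comm (A B : Proc) : StepsLike (.par A B) (.par B A) := by
  intro Γ M μ k Γ' S' h
  cases h with
  | lComL h1 h2 => exact ⟨_, .lComR h1 h2, .comm _ _⟩
  | lComR h1 h2 => exact ⟨_, .lComL h1 h2, .comm _ _⟩
  | lParL hs => exact ⟨_, .lParR hs, .comm _ _⟩
  | lParR hs => exact ⟨_, .lParL hs, .comm _ _⟩
  | lStr hes => exact ⟨_, .lStr hes, .comm _ _⟩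
  | lAllE hc => exact ⟨_, .lAllE hc, .comm _ _⟩
  | lFreeE hc => exact ⟨_, .lFreeE hc, .comm _ _⟩

theorem stepsLike_nil1 (A : Proc) : StepsLike (.par A .nil) A := by
  intro Γ M μ k Γ' S' h
  obtain ⟨M', R⟩ := S'
  exact ⟨.par R .nil, .lParL h, .nil R⟩

theorem stepsLike_nil2 (A : Proc) : StepsLike A (.par A .nil) := by
  intro Γ M μ k Γ' S' h
  cases h with
  | lComL h1 h2 => cases h2
  | lComR h1 h2 => cases h1
  | lParL hs => exact ⟨_, hs, .symm (.nil _)⟩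
  | lParR hs =>
      cases hs with
      | lStr hes => exact ⟨_, .lStr hes, .symm (.nil _)⟩
      | lAllE hc => exact ⟨_, .lAllE hc, .symm (.nil _)⟩
      | lFreeE hc => exact ⟨_, .lFreeE hc, .symm (.nil _)⟩
  | lStr hes => exact ⟨_, .lStr hes, .symm (.nil _)⟩
  | lAllE hc => exact ⟨_, .lAllE hc, .symm (.nil _)⟩
  | lFreeE hc => exact ⟨_, .lFreeE hc, .symm (.nil _)⟩

theorem stepsLike_assoc1 (A B C : Proc) :
    StepsLike (.par A (.par B C)) (.par (.par A B) C) := by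
  intro Γ M μ k Γ' S' h
  cases h with
  | lComL h1 h2 =>
      cases h1 with
      | lParL ho => exact ⟨_, .lComL ho (.lParR h2), .assoc _ _ _⟩
      | lParR ho => exact ⟨_, .lParR (.lComL ho h2), .assoc _ _ _⟩
  | lComR h1 h2 =>
      cases h2 with
      | lParL hi => exact ⟨_, .lComR (.lParR h1) hi, .assoc _ _ _⟩
      | lParR hi => exact ⟨_, .lParR (.lComR h1 hi), .assoc _ _ _⟩
  | lParL hs =>
      cases hs with
      | lParL h' => exact ⟨_, .lParL h', .assoc _ _ _⟩
      | lParR h' => exact ⟨_, .lParR (.lParL h'), .assoc _ _ _⟩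
      | lComL h1 h2 => exact ⟨_, .lComL h1 (.lParL h2), .assoc _ _ _⟩
      | lComR h1 h2 => exact ⟨_, .lComR (.lParL h1) h2, .assoc _ _ _⟩
      | lStr hes => exact ⟨_, .lStr hes, .assoc _ _ _⟩
      | lAllE hc => exact ⟨_, .lAllE hc, .assoc _ _ _⟩
      | lFreeE hc => exact ⟨_, .lFreeE hc, .assoc _ _ _⟩
  | lParR hs => exact ⟨_, .lParR (.lParR hs), .assoc _ _ _⟩
  | lStr hes => exact ⟨_, .lStr hes, .assoc _ _ _⟩
  | lAllE hc => exact ⟨_, .lAllE hc, .assoc _ _ _⟩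
  | lFreeE hc => exact ⟨_, .lFreeE hc, .assoc _ _ _⟩

theorem stepsLike_assoc2 (A B C : Proc) :
    StepsLike (.par (.par A B) C) (.par A (.par B C)) := by
  intro Γ M μ k Γ' S' h
  cases h with
  | lComL h1 h2 =>
      cases h2 with
      | lParL hi => exact ⟨_, .lParL (.lComL h1 hi), .symm (.assoc _ _ _)⟩
      | lParR hi => exact ⟨_, .lComL (.lParL h1) hi, .symm (.assoc _ _ _)⟩
  | lComR h1 h2 =>
      cases h1 with
      | lParL ho => exact ⟨_, .lParL (.lComR ho h2), .symm (.assoc _ _ _)⟩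
      | lParR ho => exact ⟨_, .lComR ho (.lParL h2), .symm (.assoc _ _ _)⟩
  | lParL hs => exact ⟨_, .lParL (.lParL hs), .symm (.assoc _ _ _)⟩
  | lParR hs =>
      cases hs with
      | lParL h' => exact ⟨_, .lParL (.lParR h'), .symm (.assoc _ _ _)⟩
      | lParR h' => exact ⟨_, .lParR h', .symm (.assoc _ _ _)⟩
      | lComL h1 h2 => exact ⟨_, .lComL (.lParR h1) h2, .symm (.assoc _ _ _)⟩
      | lComR h1 h2 => exact ⟨_, .lComR h1 (.lParR h2), .symm (.assoc _ _ _)⟩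
      | lStr hes => exact ⟨_, .lStr hes, .symm (.assoc _ _ _)⟩
      | lAllE hc => exact ⟨_, .lAllE hc, .symm (.assoc _ _ _)⟩
      | lFreeE hc => exact ⟨_, .lFreeE hc, .symm (.assoc _ _ _)⟩
  | lStr hes => exact ⟨_, .lStr hes, .symm (.assoc _ _ _)⟩
  | lAllE hc => exact ⟨_, .lAllE hc, .symm (.assoc _ _ _)⟩
  | lFreeE hc => exact ⟨_, .lFreeE hc, .symm (.assoc _ _ _)⟩

theorem stepsLike_parCong (h1 : StructEq A A') (h2 : StructEq B B')
    (iha : StepsLike A A') (ihb : StepsLike B B') :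
    StepsLike (.par A B) (.par A' B') := by
  intro Γ M μ k Γ'' S' h
  cases h with
  | lComL ho hi =>
      obtain ⟨Ra, ha, sa⟩ := iha _ _ _ _ _ _ ho
      obtain ⟨Rb, hb, sb⟩ := ihb _ _ _ _ _ _ hi
      exact ⟨.par Ra Rb, .lComL ha hb, .parCong sa sb⟩
  | lComR ho hi =>
      obtain ⟨Rb, hb, sb⟩ := ihb _ _ _ _ _ _ ho
      obtain ⟨Ra, ha, sa⟩ := iha _ _ _ _ _ _ hi
      exact ⟨.par Ra Rb, .lComR hb ha, .parCong sa sb⟩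
  | lParL hs =>
      obtain ⟨Ra, ha, sa⟩ := iha _ _ _ _ _ _ hs
      exact ⟨.par Ra B, .lParL ha, .parCong sa h2⟩
  | lParR hs =>
      obtain ⟨Rb, hb, sb⟩ := ihb _ _ _ _ _ _ hs
      exact ⟨.par A Rb, .lParR hb, .parCong h1 sb⟩
  | lStr hes => exact ⟨_, .lStr hes, .parCong h1 h2⟩
  | lAllE hc => exact ⟨_, .lAllE hc, .parCong h1 h2⟩
  | lFreeE hc => exact ⟨_, .lFreeE hc, .parCong h1 h2⟩

theorem StructEq.harmony (h : StructEq P Q) : StepsLike P Q ∧ StepsLike Q P := by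
  induction h with
  | refl P => exact ⟨fun _ _ _ _ _ _ h => ⟨_, h, .refl _⟩, fun _ _ _ _ _ _ h => ⟨_, h, .refl _⟩⟩
  | symm _ ih => exact ⟨ih.2, ih.1⟩
  | trans _ _ ih1 ih2 =>
      exact ⟨stepsLike_trans ih1.1 ih2.1, stepsLike_trans ih2.2 ih1.2⟩
  | comm A B => exact ⟨stepsLike_comm A B, stepsLike_comm B A⟩
  | assoc A B C => exact ⟨stepsLike_assoc1 A B C, stepsLike_assoc2 A B C⟩
  | nil A => exact ⟨stepsLike_nil1 A, stepsLike_nil2 A⟩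
  | parCong h1 h2 ih1 ih2 =>
      exact ⟨stepsLike_parCong h1 h2 ih1.1 ih2.1,
        stepsLike_parCong h1.symm h2.symm ih1.2 ih2.2⟩
theorem red_preStep (Γ : TyEnv) (h : Red S k S') :
    ∃ Q', PreStep Γ S .tau k Γ ⟨S'.res, Q'⟩ ∧ StructEq Q' S'.proc := by
  induction h with
  | @com M c ds xs P Q hc hlen =>
      refine ⟨_, ?_, .refl _⟩
      exact PreStep.lComL
        (PreStep.lOut (Γ := 0) (c := c) (a := .unr) (ds := ds)
          (ts := List.replicate ds.length .proc) (P := P) (M := M) rfl (by simp))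
        (PreStep.lIn (Γ := 0) (c := c) (a := .unr) (ds := ds)
          (ts := List.replicate ds.length .proc) (M := M) rfl (by simp) hlen)
  | ifThen hc => exact ⟨_, .lThen hc, .refl _⟩
  | ifElse hc hd hne => exact ⟨_, .lElse hc hd hne, .refl _⟩
  | unfold => exact ⟨_, .lRec, .refl _⟩
  | alloc hc => exact ⟨_, .lAll hc, .refl _⟩
  | @free M c P hc =>
      have hc' : c ∉ M.erase c := Finset.notMem_erase c M
      have := PreStep.lFree (Γ := Γ) (M := M.erase c) (P := P) hc'
      rw [Finset.insert_erase hc] at this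
      exact ⟨_, this, .refl _⟩
  | @str M M' P P' Q Q' k h1 _ h2 ih =>
      obtain ⟨Q'', hs, he⟩ := ih
      obtain ⟨Q₃, hs₃, he₃⟩ := h1.harmony.1 _ _ _ _ _ _ hs
      exact ⟨Q₃, hs₃, he₃.trans (he.trans h2)⟩
  | @parL M M' P P' Q k _ ih =>
      obtain ⟨Q'', hs, he⟩ := ih
      exact ⟨.par Q'' Q, .lParL hs, .parCong he (.refl Q)⟩
  | @parR M M' P Q Q' k _ ih =>
      obtain ⟨Q'', hs, he⟩ := ih
      exact ⟨.par P Q'', .lParR hs, .parCong (.refl P) he⟩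

theorem Step.of_preStep (h : PreStep Γ S μ k Γ' S') : Step Γ S μ k Γ' S' := by
  refine ⟨Equiv.refl Chan, fun c _ => rfl, ?_⟩
  have : S.rename ⇑(Equiv.refl Chan) = S := by
    have : ⇑(Equiv.refl Chan) = id := rfl
    rw [this, System.rename_id]
  rwa [this]

theorem perm_fix_inv {σ : Equiv.Perm Chan} {Γ : TyEnv}
    (hfix : ∀ c ∈ TyEnv.domChans Γ, σ c = c) :
    ∀ c ∈ TyEnv.domChans Γ, σ⁻¹ c = c := by
  intro c hc
  have := hfix c hc
  calc σ⁻¹ c = σ⁻¹ (σ c) := by rw [this]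
  _ = c := σ.symm_apply_apply c

theorem step_rename_iff {σ : Equiv.Perm Chan}
    (hfix : ∀ c ∈ TyEnv.domChans Γ, σ c = c) :
    Step Γ (S.rename σ) μ k Γ' S' ↔ Step Γ S μ k Γ' S' := by
  constructor
  · rintro ⟨ρ, hρ, hpre⟩
    refine ⟨σ.trans ρ, ?_, ?_⟩
    · intro c hc; simp [Equiv.trans_apply, hfix c hc, hρ c hc]
    · rwa [System.rename_comp] at hpre
  · rintro ⟨ρ, hρ, hpre⟩
    refine ⟨σ⁻¹.trans ρ, ?_, ?_⟩
    · intro c hc; simp [Equiv.trans_apply, perm_fix_inv hfix c hc, hρ c hc]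
    · have hco : (⇑(σ⁻¹.trans ρ)) ∘ ⇑σ = ⇑ρ := by
        funext x; simp [Equiv.trans_apply]
      rw [System.rename_comp, hco]
      exact hpre

theorem weak_rename {σ : Equiv.Perm Chan}
    (hfix : ∀ c ∈ TyEnv.domChans Γ, σ c = c)
    (h : Weak Γ (S.rename σ) μ k Γ' S') : Weak Γ S μ k Γ' S' := by
  generalize hS : S.rename ⇑σ = S₀ at h
  induction h generalizing S with
  | single hs => exact .single ((step_rename_iff hfix).mp (hS ▸ hs))
  | tauLeft hs hw _ => exact .tauLeft ((step_rename_iff hfix).mp (hS ▸ hs)) hw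
  | tauRight hw hs ih => exact .tauRight (ih hfix hS) hs

theorem step_harmony {M : Finset Chan} (hse : StructEq P P₁)
    (h : Step Γ ⟨M, P₁⟩ μ k Γ' S') :
    ∃ Q₁, Step Γ ⟨M, P⟩ μ k Γ' ⟨S'.res, Q₁⟩ ∧ StructEq Q₁ S'.proc := by
  obtain ⟨ρ, hρ, hpre⟩ := h
  have hse' : StructEq (P.rename ρ) (P₁.rename ρ) := hse.rename ρ
  obtain ⟨Q₁, hs, he⟩ := hse'.harmony.1 _ _ _ _ _ _ hpre
  exact ⟨Q₁, ⟨ρ, hρ, hs⟩, he⟩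

theorem weak_harmony (h : Weak Γ T μ k Γ' T') :
    ∀ P, StructEq P T.proc →
      ∃ Q₁, Weak Γ ⟨T.res, P⟩ μ k Γ' ⟨T'.res, Q₁⟩ ∧ StructEq Q₁ T'.proc := by
  induction h with
  | @single Γ Γ' S S' μ k hs =>
      intro P hse
      obtain ⟨Q₁, hs', he⟩ := step_harmony hse hs
      exact ⟨Q₁, .single hs', he⟩
  | @tauLeft Γ Γ₁ Γ' S S₁ S' μ l k hs _ ih =>
      intro P hse
      obtain ⟨Q₁, hs', he⟩ := step_harmony hse hs
      obtain ⟨Q₂, hw, he₂⟩ := ih Q₁ he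
      exact ⟨Q₂, .tauLeft hs' hw, he₂⟩
  | @tauRight Γ Γ₁ Γ' S S₁ S' μ l k _ hs ih =>
      intro P hse
      obtain ⟨Q₁, hw, he⟩ := ih P hse
      obtain ⟨Q₂, hs', he₂⟩ := step_harmony he hs
      exact ⟨Q₂, .tauRight hw hs', he₂⟩
theorem System.rename_cancel (σ : Equiv.Perm Chan) (S : System) :
    (S.rename ⇑σ).rename ⇑σ⁻¹ = S := by
  rw [System.rename_comp]
  have : ⇑σ⁻¹ ∘ ⇑σ = id := by funext x; simp
  rw [this, System.rename_id]

theorem System.rename_cancel' (σ : Equiv.Perm Chan) (S : System) :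
    (S.rename ⇑σ⁻¹).rename ⇑σ = S := by
  rw [System.rename_comp]
  have : ⇑σ ∘ ⇑σ⁻¹ = id := by funext x; simp
  rw [this, System.rename_id]

theorem step_tau_process {Rb : ARel} (hb : IsAmortisedBisim Rb)
    (hpair : ∃ n S₀, Rb Γ n S₀ T) (hs : Step Γ T .tau k Γ' T₁) :
    Γ' = Γ ∧ (∃ n' S', Rb Γ n' S' T₁) ∧
      ∃ σ : Equiv.Perm Chan, (∀ c ∈ TyEnv.domChans Γ, σ c = c) ∧
        Red T k (T₁.rename ⇑σ⁻¹) := by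
  obtain ⟨n, S₀, hR⟩ := hpair
  obtain ⟨ρ, hρ, hpre⟩ := hs
  have hΓ : Γ' = Γ := hpre.tau_env rfl
  have hconf : IsConfig Γ T := ((hb.1) Γ n S₀ T hR).2
  obtain ⟨_, _, Δ, _, hty, hdomΔ⟩ := hconf
  have hch : T.proc.chans ⊆ ↑T.res := fun c hc => hdomΔ (hty.chans_subset hc)
  have hch' : (T.rename ⇑ρ).proc.chans ⊆ ↑(T.rename ⇑ρ).res := by
    intro c hc
    obtain ⟨c₀, hc₀, rfl⟩ := Proc.chans_rename ⇑ρ T.proc hc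
    simp only [System.rename, Finset.coe_image, Set.mem_image]
    exact ⟨c₀, hch hc₀, rfl⟩
  have hred : Red (T.rename ⇑ρ) k T₁ := hpre.tau_red rfl hch'
  have hred' : Red T k (T₁.rename ⇑ρ⁻¹) := by
    have := hred.rename ρ⁻¹
    rwa [System.rename_cancel] at this
  have hpair' : ∃ n' S', Rb Γ n' S' T₁ := by
    obtain ⟨S', k', m, _, _, hR'⟩ := ((hb.2) Γ n S₀ T hR).2 .tau k Γ' T₁ ⟨ρ, hρ, hpre⟩
    exact ⟨m, S', hΓ ▸ hR'⟩
  exact ⟨hΓ, hpair', ρ, hρ, hred'⟩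

theorem weak_tau_redstar {Rb : ARel} (hb : IsAmortisedBisim Rb)
    (h : Weak Γ T μ k Γ' T₁) : μ = .tau → (∃ n S₀, Rb Γ n S₀ T) →
    Γ' = Γ ∧ (∃ n' S', Rb Γ n' S' T₁) ∧
      ∃ (T₂ : System) (σ : Equiv.Perm Chan), (∀ c ∈ TyEnv.domChans Γ, σ c = c) ∧
        RedStar T k T₂ ∧ T₁ = T₂.rename ⇑σ := by
  induction h with
  | @single Γ Γ' T T₁ μ k hs =>
      intro hμ hpair
      subst hμ
      obtain ⟨hΓ, hpair', σ, hfix, hred⟩ := step_tau_process hb hpair hs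
      refine ⟨hΓ, hpair', T₁.rename ⇑σ⁻¹, σ, hfix, ?_, (System.rename_cancel' σ T₁).symm⟩
      simpa using RedStar.step (RedStar.refl T) hred
  | @tauLeft Γ Γ₁ Γ' T S₁ T₁ μ l k hs hw ih =>
      intro hμ hpair
      subst hμ
      obtain ⟨hΓ, hpair₁, σ₀, hfix₀, hred⟩ := step_tau_process hb hpair hs
      subst hΓ
      obtain ⟨hΓ', hpair', T₂', σ', hfix', hrs, heq⟩ := ih rfl hpair₁
      subst hΓ'
      have hrs' : RedStar (S₁.rename ⇑σ₀⁻¹) k (T₂'.rename ⇑σ₀⁻¹) := hrs.rename σ₀⁻¹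
      refine ⟨rfl, hpair', T₂'.rename ⇑σ₀⁻¹, σ₀.trans σ', ?_, RedStar.head hred hrs', ?_⟩
      · intro c hc; simp [Equiv.trans_apply, hfix₀ c hc, hfix' c hc]
      · rw [heq, System.rename_comp]
        congr 1
        funext x
        simp [Equiv.trans_apply]
  | @tauRight Γ Γ₁ Γ' T S₁ T₁ μ l k hw hs ih =>
      intro hμ hpair
      subst hμ
      obtain ⟨hΓ, hpair₁, T₂', σ', hfix', hrs, heq⟩ := ih rfl hpair
      subst hΓ
      obtain ⟨hΓ', hpair', σ₀, hfix₀, hred⟩ := step_tau_process hb hpair₁ hs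
      subst hΓ'
      have hred' : Red T₂' k ((T₁.rename ⇑σ₀⁻¹).rename ⇑σ'⁻¹) := by
        have := hred.rename σ'⁻¹
        rw [heq] at this
        rwa [System.rename_cancel] at this
      refine ⟨rfl, hpair', (T₁.rename ⇑σ₀⁻¹).rename ⇑σ'⁻¹, σ'.trans σ₀, ?_,
        RedStar.step hrs hred', ?_⟩
      · intro c hc; simp [Equiv.trans_apply, hfix₀ c hc, hfix' c hc]
      · rw [System.rename_comp, System.rename_comp]
        have hid : (⇑(σ'.trans σ₀) ∘ ⇑σ'⁻¹) ∘ ⇑σ₀⁻¹ = id := by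
          funext x; simp [Equiv.trans_apply]
        rw [hid, System.rename_id]
theorem System.rename_refl (S : System) : S.rename ⇑(Equiv.refl Chan) = S := by
  have : ⇑(Equiv.refl Chan) = id := rfl
  rw [this, System.rename_id]

/-- The closure of an amortised bisimulation under structural equivalence on
the left and observer-invisible renamings on the right. -/
def closureRel (Rb : ARel) : ARel := fun Γ n A B =>
  IsConfig Γ A ∧ IsConfig Γ B ∧
  ∃ (A₁ : System) (σ : Equiv.Perm Chan),
    A₁.res = A.res ∧ StructEq A₁.proc A.proc ∧
    (∀ c ∈ TyEnv.domChans Γ, σ c = c) ∧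
    Rb Γ n A₁ (B.rename ⇑σ)

theorem closure_bisim {Rb : ARel} (hb : IsAmortisedBisim Rb) :
    IsAmortisedBisim (closureRel Rb) := by
  constructor
  · intro Γ n S T h; exact ⟨h.1, h.2.1⟩
  · intro Γ n A B h
    obtain ⟨hcA, hcB, A₁, σ, hres, hse, hfix, hR⟩ := h
    constructor
    · -- challenges of A
      intro μ k Γ' A' hstep
      obtain ⟨A₁', hstepA₁, hseA'⟩ := step_harmony (M := A.res) hse hstep
      have hA₁eq : (⟨A.res, A₁.proc⟩ : System) = A₁ := by rw [← hres]
      rw [hA₁eq] at hstepA₁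
      obtain ⟨T', lc, m, hwh, hm, hR'⟩ :=
        ((hb.2) Γ n A₁ (B.rename ⇑σ) hR).1 μ k Γ' ⟨A'.res, A₁'⟩ hstepA₁
      have hcA₁' : IsConfig Γ' (⟨A'.res, A₁'⟩ : System) := ((hb.1) _ _ _ _ hR').1
      have hcA' : IsConfig Γ' A' := IsConfig.structEq hseA' hcA₁'
      have hcT' : IsConfig Γ' T' := ((hb.1) _ _ _ _ hR').2
      rcases hwh with hweak | ⟨hμ, hl, hΓ, hT⟩
      · refine ⟨T', lc, m, .inl (weak_rename hfix hweak), hm, hcA', hcT',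
          ⟨A'.res, A₁'⟩, Equiv.refl Chan, rfl, hseA', fun _ _ => rfl, ?_⟩
        rw [System.rename_refl]
        exact hR'
      · refine ⟨B, 0, m, .inr ⟨hμ, rfl, hΓ, rfl⟩, hl ▸ hm, hcA', hΓ ▸ hcB,
          ⟨A'.res, A₁'⟩, σ, rfl, hseA', hΓ ▸ hfix, hT ▸ hR'⟩
    · -- challenges of B
      intro μ k Γ' B' hstep
      have hstepB₁ : Step Γ (B.rename ⇑σ) μ k Γ' B' := (step_rename_iff hfix).mpr hstep
      obtain ⟨S₁', kk, m, hwh, hm, hR'⟩ :=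
        ((hb.2) Γ n A₁ (B.rename ⇑σ) hR).2 μ k Γ' B' hstepB₁
      have hcS₁' : IsConfig Γ' S₁' := ((hb.1) _ _ _ _ hR').1
      have hcB' : IsConfig Γ' B' := ((hb.1) _ _ _ _ hR').2
      rcases hwh with hweak | ⟨hμ, hk, hΓ, hS⟩
      · obtain ⟨Q₁, hw, hseQ⟩ := weak_harmony hweak A.proc hse.symm
        have hsrc : (⟨A₁.res, A.proc⟩ : System) = A := by rw [hres]
        rw [hsrc] at hw
        refine ⟨⟨S₁'.res, Q₁⟩, kk, m, .inl hw, hm,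
          IsConfig.structEq hseQ.symm hcS₁', hcB',
          S₁', Equiv.refl Chan, rfl, hseQ.symm, fun _ _ => rfl, ?_⟩
        rw [System.rename_refl]
        exact hR'
      · refine ⟨A, 0, m, .inr ⟨hμ, rfl, hΓ, rfl⟩, hk ▸ hm, hΓ ▸ hcA, hcB',
          A₁, Equiv.refl Chan, hres, hse, fun _ _ => rfl, ?_⟩
        rw [System.rename_refl]
        exact hS ▸ hR'
/-- Amortised bisimilarity is cost improving. -/
theorem bisim_cost_improving (Γ : TyEnv) (n : ℕ) (S T S' : System) (l : ℤ)
    (h : Bisim Γ n S T) (hred : Red S l S') :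
    ∃ (T' : System) (k : ℤ) (m : ℕ),
      RedStar T k T' ∧ (m : ℤ) = (n : ℤ) + k - l ∧ Bisim Γ m S' T' := by
  obtain ⟨Rb, hb, hR⟩ := h
  obtain ⟨S₁p, hpre, hseS⟩ := red_preStep Γ hred
  have hstep : Step Γ S .tau l Γ ⟨S'.res, S₁p⟩ := .of_preStep hpre
  obtain ⟨T₁, lT, m, hwh, hm, hR'⟩ := ((hb.2) Γ n S T hR).1 .tau l Γ ⟨S'.res, S₁p⟩ hstep
  have hcS₁ : IsConfig Γ (⟨S'.res, S₁p⟩ : System) := ((hb.1) _ _ _ _ hR').1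
  have hcS' : IsConfig Γ S' := IsConfig.structEq hseS hcS₁
  have hcT₁ : IsConfig Γ T₁ := ((hb.1) _ _ _ _ hR').2
  rcases hwh with hweak | ⟨_, hl0, _, hT⟩
  · obtain ⟨_, _, T₂, σ, hfix, hrs, heqT₁⟩ := weak_tau_redstar hb hweak rfl ⟨n, S, hR⟩
    refine ⟨T₂, lT, m, hrs, hm, closureRel Rb, closure_bisim hb, hcS', ?_, ?_⟩
    · have : T₂ = T₁.rename ⇑σ⁻¹ := by rw [heqT₁, System.rename_cancel]
      rw [this]
      exact IsConfig.rename σ⁻¹ (perm_fix_inv hfix) hcT₁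
    · exact ⟨⟨S'.res, S₁p⟩, σ, rfl, hseS, hfix, heqT₁ ▸ hR'⟩
  · refine ⟨T, 0, m, RedStar.refl T, hl0 ▸ hm, closureRel Rb, closure_bisim hb, hcS',
      hT ▸ hcT₁, ?_⟩
    refine ⟨⟨S'.res, S₁p⟩, Equiv.refl Chan, rfl, hseS, fun _ _ => rfl, ?_⟩
    rw [System.rename_refl]
    exact hT ▸ hR'
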